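/- Let P > 0. Suppose (x_1^{PM},…,x_{N_s}^{PM}) is an optimal solution of the block-level PM slot-variant problem (minimize ∑_{i=1}^{N_s} ‖x_i‖² subject to CI_i(x_i, 1) for all i), and let P^{PM} := ∑_{i=1}^{N_s} ‖x_i^{PM}‖² with P^{PM} > 0. Then the tuple (√(P/P^{PM})·x_1^{PM}, …, √(P/P^{PM})·x_{N_s}^{PM}, √(P/P^{PM})) is an optimal solution of the block-level SB slot-variant problem: it satisfies CI_i(√(P/P^{PM})·x_i^{PM}, √(P/P^{PM})) for all i and ∑_i ‖√(P/P^{PM})·x_i^{PM}‖² ≤ P, and every tuple (x_1,…,x_{N_s}, t) with CI_i(x_i, t) for all i and ∑_i ‖x_i‖² ≤ P satisfies t ≤ √(P/P^{PM}). -/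
import Mathlib


open scoped BigOperators

/-- The constructive-interference (CI) constraint in a given symbol slot:
`CI Nt Nr M h s γ σ x t` holds iff for every user `k`,
`Re((h_kᵀ x)/s_k) − |Im((h_kᵀ x)/s_k)| / tan(π/M) ≥ t·√(γ_k)·σ`. -/
noncomputable def CI (Nt Nr M : ℕ) (h : Fin Nr → Fin Nt → ℂ)
    (s : Fin Nr → ℂ) (γ : Fin Nr → ℝ) (σ : ℝ)
    (x : Fin Nt → ℂ) (t : ℝ) : Prop :=
  ∀ k : Fin Nr,
    ((∑ j, h k j * x j) / s k).re -
        |((∑ j, h k j * x j) / s k).im| / Real.tan (Real.pi / M) ≥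
      t * Real.sqrt (γ k) * σ

lemma CI_smul (Nt Nr M : ℕ) (h : Fin Nr → Fin Nt → ℂ)
    (s : Fin Nr → ℂ) (γ : Fin Nr → ℝ) (σ : ℝ)
    (x : Fin Nt → ℂ) (t c : ℝ) (hc : 0 ≤ c)
    (hCI : CI Nt Nr M h s γ σ x t) :
    CI Nt Nr M h s γ σ (c • x) (c * t) := by
  intro k
  have key : (∑ j, h k j * (c • x) j) / s k
      = (c : ℂ) * ((∑ j, h k j * x j) / s k) := by
    rw [eq_comm, ← mul_div_assoc, Finset.mul_sum]
    congr 1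
    exact Finset.sum_congr rfl fun j _ => by
      simp [Complex.real_smul]; ring
  have hk := hCI k
  rw [key]
  have hre : ((c : ℂ) * ((∑ j, h k j * x j) / s k)).re
      = c * ((∑ j, h k j * x j) / s k).re := by simp
  have him : ((c : ℂ) * ((∑ j, h k j * x j) / s k)).im
      = c * ((∑ j, h k j * x j) / s k).im := by simp
  rw [hre, him, abs_mul, abs_of_nonneg hc]
  have : c * ((∑ j, h k j * x j) / s k).re -
      c * |((∑ j, h k j * x j) / s k).im| / Real.tan (Real.pi / M)
      = c * (((∑ j, h k j * x j) / s k).re -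
        |((∑ j, h k j * x j) / s k).im| / Real.tan (Real.pi / M)) := by ring
  rw [this]
  calc c * t * Real.sqrt (γ k) * σ = c * (t * Real.sqrt (γ k) * σ) := by ring
    _ ≤ c * (((∑ j, h k j * x j) / s k).re -
        |((∑ j, h k j * x j) / s k).im| / Real.tan (Real.pi / M)) :=
      mul_le_mul_of_nonneg_left hk hc

lemma power_smul (Nt Ns : ℕ) (x : Fin Ns → Fin Nt → ℂ) (c : ℝ) :
    ∑ i, ∑ j, ‖(c • x i) j‖ ^ 2 = c ^ 2 * ∑ i, ∑ j, ‖x i j‖ ^ 2 := by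
  rw [Finset.mul_sum]
  refine Finset.sum_congr rfl fun i _ => ?_
  rw [Finset.mul_sum]
  refine Finset.sum_congr rfl fun j _ => ?_
  simp [norm_smul, mul_pow, sq_abs]

/-- A block-level PM slot-variant optimum with total power `P^{PM} > 0` yields,
after scaling by `√(P/P^{PM})`, a block-level SB slot-variant optimum for budget `P`. -/
theorem stmt5 (Nt Nr Ns M : ℕ) (hNt : 0 < Nt) (hNr : 0 < Nr) (hNs : 0 < Ns)
    (hM : 3 ≤ M)
    (h : Fin Nr → Fin Nt → ℂ)
    (s : Fin Nr → Fin Ns → ℂ) (hs : ∀ k i, s k i ≠ 0)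
    (γ : Fin Nr → Fin Ns → ℝ) (hγ : ∀ k i, 0 ≤ γ k i)
    (σ : ℝ) (hσ : 0 < σ)
    (P : ℝ) (hP : 0 < P)
    (xPM : Fin Ns → Fin Nt → ℂ)
    (hfeas : ∀ i, CI Nt Nr M h (fun k => s k i) (fun k => γ k i) σ (xPM i) 1)
    (hopt : ∀ y : Fin Ns → Fin Nt → ℂ,
      (∀ i, CI Nt Nr M h (fun k => s k i) (fun k => γ k i) σ (y i) 1) →
      ∑ i, ∑ j, ‖xPM i j‖ ^ 2 ≤ ∑ i, ∑ j, ‖y i j‖ ^ 2)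
    (PPM : ℝ) (hPPM : PPM = ∑ i, ∑ j, ‖xPM i j‖ ^ 2) (hPPM0 : 0 < PPM) :
    (∀ i, CI Nt Nr M h (fun k => s k i) (fun k => γ k i) σ
        (Real.sqrt (P / PPM) • xPM i) (Real.sqrt (P / PPM))) ∧
    (∑ i, ∑ j, ‖(Real.sqrt (P / PPM) • xPM i) j‖ ^ 2 ≤ P) ∧
    (∀ (x : Fin Ns → Fin Nt → ℂ) (t : ℝ),
      (∀ i, CI Nt Nr M h (fun k => s k i) (fun k => γ k i) σ (x i) t) →
      (∑ i, ∑ j, ‖x i j‖ ^ 2 ≤ P) → t ≤ Real.sqrt (P / PPM)) := by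
  set c : ℝ := Real.sqrt (P / PPM) with hc
  have hc0 : 0 ≤ c := Real.sqrt_nonneg _
  have hcsq : c ^ 2 = P / PPM := Real.sq_sqrt (le_of_lt (div_pos hP hPPM0))
  refine ⟨fun i => ?_, ?_, ?_⟩
  · have := CI_smul Nt Nr M h (fun k => s k i) (fun k => γ k i) σ (xPM i) 1 c hc0 (hfeas i)
    simpa using this
  · rw [power_smul, ← hPPM, hcsq, div_mul_cancel₀ _ (ne_of_gt hPPM0)]
  · intro x t hx hpow
    rcases le_or_gt t 0 with ht | ht
    · exact ht.trans hc0
    · have hfe : ∀ i, CI Nt Nr M h (fun k => s k i) (fun k => γ k i) σ (t⁻¹ • x i) 1 := by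
        intro i
        have := CI_smul Nt Nr M h (fun k => s k i) (fun k => γ k i) σ (x i) t t⁻¹
          (inv_nonneg.mpr ht.le) (hx i)
        rwa [inv_mul_cancel₀ (ne_of_gt ht)] at this
      have hle := hopt _ hfe
      rw [power_smul, ← hPPM] at hle
      -- PPM ≤ t⁻²  * ∑ ≤ t⁻² * P
      have h2 : PPM ≤ t⁻¹ ^ 2 * P :=
        hle.trans (mul_le_mul_of_nonneg_left hpow (by positivity))
      have h3 : t ^ 2 ≤ P / PPM := by
        rw [le_div_iff₀ hPPM0]
        calc t ^ 2 * PPM ≤ t ^ 2 * (t⁻¹ ^ 2 * P) :=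
              mul_le_mul_of_nonneg_left h2 (sq_nonneg t)
          _ = P := by field_simp
      calc t = Real.sqrt (t ^ 2) := (Real.sqrt_sq ht.le).symm
        _ ≤ c := Real.sqrt_le_sqrt h3
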